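/- For a spin (j+1/2) Killing spinor φ with Killing number μ on a 3-manifold, the curvature action q(R) = (scal/8)(2j+3)(2j+1) + (1/4)Σᵢ π_j(eᵢ)π_j(Ric(eᵢ)) satisfies q(R)φ = μ²(2j+3)(2j+1)φ. Since q(R) is a symmetric endomorphism, μ² is real, hence μ is either real or purely imaginary. -/

import Mathlib

/-- For a spin `(j+1/2)` Killing spinor `φ` with Killing number `μ` on a 3-manifold, the
curvature action `q(R) = (scal/8)(2j+3)(2j+1)·Id + (1/4)Σᵢ π_j(eᵢ)π_j(Ric(eᵢ))` satisfies
`q(R)φ = μ²(2j+3)(2j+1)φ`; since `q(R)` is a symmetric endomorphism, `μ²` is real, hence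
`μ` is either real or purely imaginary.  Pointwise formulation in a local orthonormal
frame: `A i = π_j(eᵢ)` is the skew-adjoint `su(2)`-action with the Casimir identity,
`Ric` is the (symmetric) Ricci endomorphism in the frame, and `hint` is the
integrability condition satisfied by Killing spinors. -/
theorem curvature_action_on_killing_spinor (j : ℕ) (W : Type*) [NormedAddCommGroup W]
    [InnerProductSpace ℂ W] [FiniteDimensional ℂ W]
    (A : Fin 3 → W →ₗ[ℂ] W)
    (hskew : ∀ i, LinearMap.adjoint (A i) = -A i)
    (hcas : A 0 ∘ₗ A 0 + A 1 ∘ₗ A 1 + A 2 ∘ₗ A 2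
      = (-((2 * (j : ℂ) + 1) * (2 * (j : ℂ) + 3))) • LinearMap.id)
    (μ : ℂ) (scal : ℝ) (Ric : Fin 3 → Fin 3 → ℝ)
    (hRicSymm : ∀ k l, Ric k l = Ric l k)
    (φ : W) (hφ : φ ≠ 0)
    (hint : ∀ k, ((∑ i, ((Ric k i : ℝ) : ℂ) • A i)
      - ((1 / 2 : ℂ) * (((scal : ℂ)) - 8 * μ ^ 2)) • A k) φ = 0)
    (qR : W →ₗ[ℂ] W)
    (hqR : qR = (((scal : ℂ) / 8) * ((2 * (j : ℂ) + 3) * (2 * (j : ℂ) + 1))) • LinearMap.id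
      + (1 / 4 : ℂ) • ∑ i, A i ∘ₗ (∑ m, ((Ric i m : ℝ) : ℂ) • A m)) :
    qR φ = (μ ^ 2 * ((2 * (j : ℂ) + 3) * (2 * (j : ℂ) + 1))) • φ ∧
    (μ ^ 2).im = 0 ∧ (μ.re = 0 ∨ μ.im = 0) := by
  set c : ℂ := (1 / 2 : ℂ) * (((scal : ℂ)) - 8 * μ ^ 2) with hc
  set K : ℂ := (2 * (j : ℂ) + 1) * (2 * (j : ℂ) + 3) with hK
  -- integrability condition as an eigen-type equation
  have hint' : ∀ k, (∑ i, ((Ric k i : ℝ) : ℂ) • A i) φ = c • A k φ := by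
    intro k
    have h := hint k
    rw [LinearMap.sub_apply, sub_eq_zero] at h
    simpa using h
  -- the Casimir identity applied to φ
  have hcasφ : A 0 (A 0 φ) + A 1 (A 1 φ) + A 2 (A 2 φ) = (-K) • φ := by
    have := congrArg (fun T : W →ₗ[ℂ] W => T φ) hcas
    simpa using this
  -- the action of the curvature operator's second term
  have hT : (∑ i, A i ∘ₗ (∑ m, ((Ric i m : ℝ) : ℂ) • A m)) φ = (c * (-K)) • φ := by
    have h1 : ∀ i, (A i ∘ₗ (∑ m, ((Ric i m : ℝ) : ℂ) • A m)) φ = c • A i (A i φ) := by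
      intro i
      rw [LinearMap.comp_apply, hint' i, map_smul]
    rw [LinearMap.sum_apply]
    simp only [h1]
    rw [← Finset.smul_sum, Fin.sum_univ_three, hcasφ, smul_smul]
  -- part 1: the eigenvalue equation
  have heig : qR φ = (μ ^ 2 * ((2 * (j : ℂ) + 3) * (2 * (j : ℂ) + 1))) • φ := by
    rw [hqR, LinearMap.add_apply, LinearMap.smul_apply, LinearMap.smul_apply, hT,
      LinearMap.id_apply, smul_smul, ← add_smul]
    congr 1
    rw [hc, hK]
    ring
  refine ⟨heig, ?_⟩
  -- part 2: μ² is real, via symmetry of the operator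
  set s : ℂ := inner ℂ φ ((∑ i, A i ∘ₗ (∑ m, ((Ric i m : ℝ) : ℂ) • A m)) φ) with hs
  have hs_expand : s = ∑ i, ∑ m, ((Ric i m : ℝ) : ℂ) * (-(inner ℂ (A i φ) (A m φ) : ℂ)) := by
    rw [hs, LinearMap.sum_apply, inner_sum]
    refine Finset.sum_congr rfl fun i _ => ?_
    rw [LinearMap.comp_apply, LinearMap.sum_apply, map_sum, inner_sum]
    refine Finset.sum_congr rfl fun m _ => ?_
    rw [LinearMap.smul_apply, map_smul, inner_smul_right]
    congr 1
    rw [← LinearMap.adjoint_inner_left, hskew, LinearMap.neg_apply, inner_neg_left]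
  have hconj : (starRingEnd ℂ) s = s := by
    conv_lhs => rw [hs_expand]
    rw [map_sum]
    conv_rhs => rw [hs_expand, Finset.sum_comm]
    refine Finset.sum_congr rfl fun i _ => ?_
    rw [map_sum]
    refine Finset.sum_congr rfl fun m _ => ?_
    rw [map_mul, map_neg, Complex.conj_ofReal, inner_conj_symm, hRicSymm]
  have hsim : s.im = 0 := Complex.conj_eq_iff_im.mp hconj
  set r : ℂ := inner ℂ φ φ with hr
  have hrim : r.im = 0 := by
    rw [hr]; exact inner_self_im (𝕜 := ℂ) φ
  have hrne : r ≠ 0 := inner_self_ne_zero.mpr hφ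
  have hrre : r.re ≠ 0 := by
    intro h
    exact hrne (Complex.ext h hrim)
  have hsval : s = (c * (-K)) * r := by
    rw [hs, hT, inner_smul_right, hr]
  have hKr : (-K) = (((-((2 * (j : ℝ) + 1) * (2 * (j : ℝ) + 3))) : ℝ) : ℂ) := by
    rw [hK]; push_cast; ring
  have hKne : (-((2 * (j : ℝ) + 1) * (2 * (j : ℝ) + 3))) ≠ 0 := by
    have : (0 : ℝ) < (2 * (j : ℝ) + 1) * (2 * (j : ℝ) + 3) := by positivity
    linarith
  have hcKim : (c * (-K)).im = c.im * (-((2 * (j : ℝ) + 1) * (2 * (j : ℝ) + 3))) := by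
    rw [hKr, Complex.mul_im, Complex.ofReal_im, Complex.ofReal_re]
    ring
  have him : c.im * (-((2 * (j : ℝ) + 1) * (2 * (j : ℝ) + 3))) * r.re = 0 := by
    have h1 : s.im = (c * (-K)).im * r.re := by
      rw [hsval, Complex.mul_im, hrim]
      ring
    rw [← hcKim, ← h1, hsim]
  have hcim : c.im = 0 := by
    rcases mul_eq_zero.mp him with h | h
    · rcases mul_eq_zero.mp h with h' | h'
      · exact h'
      · exact absurd h' hKne
    · exact absurd h hrre
  have hμ2 : (μ ^ 2).im = 0 := by
    have h4 : c.im = -4 * (μ ^ 2).im := by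
      rw [hc]
      simp [Complex.mul_im, Complex.sub_im, Complex.ofReal_im]
      ring
    rw [h4] at hcim
    linarith
  refine ⟨hμ2, ?_⟩
  -- part 3: μ is real or purely imaginary
  have h2 : (μ ^ 2).im = 2 * μ.re * μ.im := by
    rw [sq, Complex.mul_im]; ring
  rw [h2] at hμ2
  rcases mul_eq_zero.mp hμ2 with h | h
  · left
    rcases mul_eq_zero.mp h with h' | h'
    · norm_num at h'
    · exact h'
  · right; exact h
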